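/- arXiv:1011.4090 — 5 statements merged into one kernel-verified Lean document; each statement's English description precedes it below -/
import Mathlib

section
/- Let P(t₁,…,t_n) be a symmetric polynomial over a field of characteristic 0, and let x₀ be a fixed point. Suppose P vanishes whenever N+1−k of its arguments are set equal to x₀, where 0 ≤ k ≤ N and 0 ≤ l < k with N−l ≤ n. Then the polynomial obtained by setting N−l of the arguments equal to a variable x, namely (x, t₁,…,t_{n−N+l}) ↦ P(x,…,x,t₁,…,t_{n−N+l}), is divisible by (x − x₀)^{k−l} as a polynomial in x. -/
open MvPolynomial Polynomial

/-- A permutation mapping one finset into another of at least equal cardinality. -/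
lemma exists_perm_mapsTo {α : Type*} [Fintype α] [DecidableEq α]
    (s t : Finset α) (h : s.card ≤ t.card) :
    ∃ σ : Equiv.Perm α, ∀ a ∈ s, σ a ∈ t := by
  obtain ⟨t', ht's, ht'⟩ := Finset.exists_subset_card_eq h
  have hc : s.card = t'.card := ht'.symm
  have hcc : sᶜ.card = t'ᶜ.card := by
    rw [Finset.card_compl, Finset.card_compl, hc]
  let e1 : {x // x ∈ s} ≃ {x // x ∈ t'} := Finset.equivOfCardEq hc
  let e2 : {x // ¬ x ∈ s} ≃ {x // ¬ x ∈ t'} :=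
    (Equiv.subtypeEquivRight (fun x => (Finset.mem_compl).symm)).trans
      ((Finset.equivOfCardEq hcc).trans
        (Equiv.subtypeEquivRight (fun x => Finset.mem_compl)))
  refine ⟨(Equiv.sumCompl (· ∈ s)).symm.trans ((e1.sumCongr e2).trans
      (Equiv.sumCompl (· ∈ t'))), ?_⟩
  intro a ha
  have : (Equiv.sumCompl (· ∈ s)).symm a = Sum.inl ⟨a, ha⟩ :=
    Equiv.sumCompl_symm_apply_of_pos ha
  simp only [Equiv.trans_apply, this, Equiv.sumCongr_apply, Sum.map_inl,
    Equiv.sumCompl_apply_inl]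
  exact ht's (e1 ⟨a, ha⟩).2


/-- `aeval` into the base ring coincides with `eval`. -/
lemma aeval_eq_eval_pt {F : Type*} [CommSemiring F] {σ : Type*} (z : σ → F)
    (p : MvPolynomial σ F) : MvPolynomial.aeval z p = MvPolynomial.eval z p := by
  rw [← MvPolynomial.coe_aeval_eq_eval]; rfl

/-- Masking variables outside `S` does not change coefficients of monomials
supported in `S`. -/
lemma coeff_aeval_mask {F : Type*} [CommSemiring F] {σ : Type*} [DecidableEq σ]
    (R : MvPolynomial σ F) (S : Finset σ) (d : σ →₀ ℕ) (hd : d.support ⊆ S) :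
    MvPolynomial.coeff d (MvPolynomial.aeval
        (fun i => if i ∈ S then (MvPolynomial.X i : MvPolynomial σ F) else 0) R)
      = MvPolynomial.coeff d R := by
  classical
  rw [MvPolynomial.aeval_def, MvPolynomial.eval₂_eq, MvPolynomial.coeff_sum]
  have hterm : ∀ e ∈ R.support,
      MvPolynomial.coeff d ((algebraMap F (MvPolynomial σ F)) (MvPolynomial.coeff e R) *
        ∏ i ∈ e.support, (if i ∈ S then (MvPolynomial.X i : MvPolynomial σ F) else 0) ^ e i)
      = if e = d then MvPolynomial.coeff e R else 0 := by
    intro e _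
    by_cases hes : e.support ⊆ S
    · have hprod : (∏ i ∈ e.support,
            (if i ∈ S then (MvPolynomial.X i : MvPolynomial σ F) else 0) ^ e i)
          = ∏ i ∈ e.support, (MvPolynomial.X i : MvPolynomial σ F) ^ e i :=
        Finset.prod_congr rfl (fun i hi => by rw [if_pos (hes hi)])
      rw [hprod]
      have : (algebraMap F (MvPolynomial σ F)) (MvPolynomial.coeff e R) *
            ∏ i ∈ e.support, (MvPolynomial.X i : MvPolynomial σ F) ^ e i
          = MvPolynomial.monomial e (MvPolynomial.coeff e R) := by
        rw [MvPolynomial.monomial_eq]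
        rfl
      rw [this, MvPolynomial.coeff_monomial]
    · obtain ⟨i, hi, hiS⟩ := Finset.not_subset.mp hes
      have hne : e ≠ d := by rintro rfl; exact hiS (hd hi)
      rw [Finset.prod_eq_zero hi, if_neg hne, mul_zero, MvPolynomial.coeff_zero]
      rw [if_neg hiS]
      exact zero_pow (by simpa using hi)
  rw [Finset.sum_congr rfl hterm, Finset.sum_ite_eq' R.support d
    (fun e => MvPolynomial.coeff e R)]
  split
  · rfl
  · next h => exact ((MvPolynomial.notMem_support_iff).mp h).symm

/-- If a polynomial vanishes on all points supported on any set of at most `r`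
coordinates, then all its monomials with support of size at most `r` vanish. -/
lemma coeff_eq_zero_of_small_support {F : Type*} [Field F] [CharZero F] {m : ℕ}
    (R : MvPolynomial (Fin m) F) (r : ℕ)
    (h : ∀ S : Finset (Fin m), S.card ≤ r → ∀ z : Fin m → F,
      (∀ i, i ∉ S → z i = 0) → MvPolynomial.eval z R = 0)
    (d : Fin m →₀ ℕ) (hd : d.support.card ≤ r) :
    MvPolynomial.coeff d R = 0 := by
  classical
  set S := d.support with hS
  have hM : (MvPolynomial.aeval
      (fun i => if i ∈ S then (MvPolynomial.X i : MvPolynomial (Fin m) F) else 0) R) = 0 := by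
    apply MvPolynomial.funext
    intro z
    rw [map_zero]
    have h1 : MvPolynomial.eval z (MvPolynomial.aeval
        (fun i => if i ∈ S then (MvPolynomial.X i : MvPolynomial (Fin m) F) else 0) R)
        = MvPolynomial.eval (fun i => if i ∈ S then z i else 0) R := by
      rw [← aeval_eq_eval_pt z, MvPolynomial.comp_aeval_apply]
      rw [show (fun i => (MvPolynomial.aeval z)
            (if i ∈ S then (MvPolynomial.X i : MvPolynomial (Fin m) F) else 0))
          = (fun i => if i ∈ S then z i else 0) from funext fun i => by
            by_cases hi : i ∈ S <;> simp [hi]]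
      exact aeval_eq_eval_pt _ R
    rw [h1]
    exact h S hd _ (fun i hi => by simp [hi])
  have := coeff_aeval_mask R S d (by rw [hS])
  rw [hM, MvPolynomial.coeff_zero] at this
  exact this.symm

/-- If a symmetric polynomial `P` in `n` variables vanishes whenever `N+1−k` of its
arguments are set equal to the fixed point `x₀`, then setting `N−l` of the arguments
(with `0 ≤ l < k`) equal to a variable `x` yields a polynomial in `x` divisible by
`(x − x₀)^{k−l}`. -/
theorem cluster_order_of_vanishing {F : Type*} [Field F] [CharZero F]
    (n N k l : ℕ) (hk : k ≤ N) (hl : l < k) (hln : N - l ≤ n)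
    (x₀ : F) (P : MvPolynomial (Fin n) F)
    (hsym : ∀ σ : Equiv.Perm (Fin n), MvPolynomial.rename σ P = P)
    (hvan : ∀ v : Fin n → F, (∀ i : Fin n, (i : ℕ) < N + 1 - k → v i = x₀) →
        MvPolynomial.eval v P = 0)
    (t : Fin (n - (N - l)) → F) :
    (Polynomial.X - Polynomial.C x₀) ^ (k - l) ∣
      MvPolynomial.aeval (fun i : Fin n =>
        if h : (i : ℕ) < N - l then (Polynomial.X : Polynomial F)
        else Polynomial.C (t ⟨(i : ℕ) - (N - l), by have := i.isLt; omega⟩)) P := by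
  classical
  set Q : Polynomial F := MvPolynomial.aeval (fun i : Fin n =>
        if h : (i : ℕ) < N - l then (Polynomial.X : Polynomial F)
        else Polynomial.C (t ⟨(i : ℕ) - (N - l), by have := i.isLt; omega⟩)) P with hQ
  -- the intermediate multivariate polynomial, shifted by x₀
  set g₂ : Fin n → MvPolynomial (Fin (N - l)) F := fun i =>
    if h : (i : ℕ) < N - l then MvPolynomial.X (⟨(i : ℕ), h⟩ : Fin (N - l)) + MvPolynomial.C x₀
    else MvPolynomial.C (t ⟨(i : ℕ) - (N - l), by have := i.isLt; omega⟩) with hg₂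
  set R : MvPolynomial (Fin (N - l)) F := MvPolynomial.aeval g₂ P with hR
  -- Step A : every monomial of R has support of size at least k - l
  have hsupp : ∀ d ∈ R.support, k - l ≤ d.support.card := by
    intro d hd
    by_contra hcon
    push_neg at hcon
    have hd0 : MvPolynomial.coeff d R = 0 := by
      apply coeff_eq_zero_of_small_support R (k - l - 1) _ d (by omega)
      intro S hS z hz
      -- evaluate R at z : equals evaluation of P at a point with many x₀'s
      have heval : MvPolynomial.eval z R
          = MvPolynomial.eval (fun i => MvPolynomial.eval z (g₂ i)) P := by
        rw [hR, ← aeval_eq_eval_pt z, MvPolynomial.comp_aeval_apply,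
          show (fun i => (MvPolynomial.aeval z) (g₂ i))
            = (fun i => MvPolynomial.eval z (g₂ i)) from
              funext fun i => aeval_eq_eval_pt z (g₂ i)]
        exact aeval_eq_eval_pt _ P
      rw [heval]
      set v : Fin n → F := fun i => MvPolynomial.eval z (g₂ i) with hv
      -- the set of coordinates where v equals x₀
      set T : Finset (Fin n) := Finset.univ.filter (fun j => v j = x₀) with hT
      have hmn : N - l ≤ n := hln
      have hTcard : N - l - S.card ≤ T.card := by
        have hsub : Sᶜ.map (Fin.castLEEmb hmn) ⊆ T := by
          intro j hj
          simp only [Finset.mem_map, Finset.mem_compl] at hj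
          obtain ⟨j₀, hj₀, rfl⟩ := hj
          have hjm : ((Fin.castLEEmb hmn j₀ : Fin n) : ℕ) < N - l := by
            simpa using j₀.isLt
          simp only [hT, Finset.mem_filter, Finset.mem_univ, true_and, hv, hg₂]
          rw [dif_pos hjm]
          have : (⟨((Fin.castLEEmb hmn j₀ : Fin n) : ℕ), hjm⟩ : Fin (N - l)) = j₀ := by
            apply Fin.ext; rfl
          rw [this]
          simp [hz j₀ hj₀]
        calc N - l - S.card = Sᶜ.card := by rw [Finset.card_compl, Fintype.card_fin]
          _ = (Sᶜ.map (Fin.castLEEmb hmn)).card := (Finset.card_map _).symm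
          _ ≤ T.card := Finset.card_le_card hsub
      -- the set of the first N+1-k coordinates
      set s : Finset (Fin n) := Finset.univ.filter (fun j : Fin n => (j : ℕ) < N + 1 - k)
        with hs
      have hckn : N + 1 - k ≤ n := by omega
      have hscard : s.card = N + 1 - k := by
        have : s = (Finset.univ : Finset (Fin (N + 1 - k))).map (Fin.castLEEmb hckn) := by
          ext j
          simp only [hs, Finset.mem_filter, Finset.mem_univ, true_and, Finset.mem_map]
          constructor
          · intro hj
            exact ⟨⟨(j : ℕ), hj⟩, by apply Fin.ext; rfl⟩
          · rintro ⟨j₀, -, rfl⟩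
            simpa using j₀.isLt
        rw [this, Finset.card_map, Finset.card_univ, Fintype.card_fin]
      have hst : s.card ≤ T.card := by
        rw [hscard]
        omega
      obtain ⟨σ, hσ⟩ := exists_perm_mapsTo s T hst
      rw [← hsym σ, MvPolynomial.eval_rename]
      apply hvan
      intro i hi
      have : σ i ∈ T := hσ i (by simp [hs, hi])
      simpa [hT] using this
    exact (MvPolynomial.mem_support_iff.mp hd) hd0
  -- Step B : taylor expansion of Q at x₀ equals the diagonal of R
  have hbridge : Polynomial.taylor x₀ Q
      = MvPolynomial.aeval (fun _ : Fin (N - l) => (Polynomial.X : Polynomial F)) R := by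
    rw [Polynomial.taylor_apply, Polynomial.comp_eq_aeval, hQ, hR,
      MvPolynomial.comp_aeval_apply, MvPolynomial.comp_aeval_apply]
    refine congrArg (fun f : Fin n → Polynomial F => MvPolynomial.aeval f P)
      (funext fun i => ?_)
    simp only [hg₂]
    by_cases h : (i : ℕ) < N - l
    · simp [h]
    · simp [h, Polynomial.algebraMap_eq]
  -- Step C : low coefficients of taylor x₀ Q vanish
  have hcoeffQ : ∀ j < k - l, (Polynomial.taylor x₀ Q).coeff j = 0 := by
    intro j hj
    rw [hbridge, MvPolynomial.aeval_def, MvPolynomial.eval₂_eq,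
      Polynomial.finset_sum_coeff]
    apply Finset.sum_eq_zero
    intro d hd
    rw [Finset.prod_pow_eq_pow_sum]
    have hdeg : k - l ≤ ∑ i ∈ d.support, d i := by
      calc k - l ≤ d.support.card := hsupp d hd
        _ = ∑ i ∈ d.support, 1 := Finset.card_eq_sum_ones _
        _ ≤ ∑ i ∈ d.support, d i := Finset.sum_le_sum
            (fun i hi => Nat.one_le_iff_ne_zero.mpr (Finsupp.mem_support_iff.mp hi))
    rw [show (algebraMap F (Polynomial F)) (MvPolynomial.coeff d R)
        = Polynomial.C (MvPolynomial.coeff d R) from rfl,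
      Polynomial.coeff_C_mul, Polynomial.coeff_X_pow, if_neg (by omega), mul_zero]
  -- Step D : conclude divisibility
  obtain ⟨q, hq⟩ := Polynomial.X_pow_dvd_iff.mpr hcoeffQ
  refine ⟨Polynomial.taylor (-x₀) q, ?_⟩
  have := congrArg (⇑(Polynomial.taylor (-x₀))) hq
  rw [Polynomial.taylor_taylor, neg_add_cancel, Polynomial.taylor_zero] at this
  rw [this, Polynomial.taylor_apply, Polynomial.mul_comp, Polynomial.pow_comp,
    Polynomial.X_comp, map_neg, ← sub_eq_add_neg, Polynomial.taylor_apply,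
    map_neg, ← sub_eq_add_neg]
end

section
/- Let f : [0,∞) → ℝ be continuous at 0 and bounded on [0,Λ] for some Λ > 0. Then lim_{a → (−1)⁺} (1+a) · ∫₀^Λ x^a f(x) dx = f(0). -/
open Filter

open MeasureTheory intervalIntegral in
private lemma aux_integ {g : ℝ → ℝ} (hg : Measurable g) {a Λ C : ℝ} (ha : -1 < a)
    (hΛ : 0 ≤ Λ) (hC : ∀ x ∈ Set.Ioc (0:ℝ) Λ, |g x| ≤ C) :
    IntervalIntegrable (fun x => x ^ a * g x) volume 0 Λ := by
  have hint : IntervalIntegrable (fun x => x ^ a * C) volume 0 Λ :=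
    (intervalIntegrable_rpow' ha).mul_const C
  refine hint.mono_fun ?_ ?_
  · exact ((measurable_id.pow_const a).mul hg).aestronglyMeasurable
  · rw [Set.uIoc_of_le hΛ]
    refine ae_restrict_of_forall_mem measurableSet_Ioc fun x hx => ?_
    have hxpos : 0 < x ^ a := Real.rpow_pos_of_pos hx.1 a
    have h1 : |x ^ a * g x| = x ^ a * |g x| := by
      rw [abs_mul, abs_of_pos hxpos]
    have h2 : |x ^ a * C| = x ^ a * C := by
      rw [abs_of_nonneg (mul_nonneg hxpos.le ((abs_nonneg _).trans (hC x hx)))]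
    simp only [Real.norm_eq_abs, h1, h2]
    exact mul_le_mul_of_nonneg_left (hC x hx) hxpos.le

/-- If `f` is continuous at `0` (from the right) and bounded on `[0,Λ]`, then
`lim_{a → (−1)⁺} (1+a) · ∫₀^Λ x^a f(x) dx = f(0)`. -/
theorem limit_one_add_a_mul_integral (f : ℝ → ℝ) (Λ : ℝ) (hΛ : 0 < Λ)
    (hmeas : Measurable f)
    (hcont : ContinuousWithinAt f (Set.Ici 0) 0)
    (hbdd : ∃ M : ℝ, ∀ x ∈ Set.Icc (0 : ℝ) Λ, |f x| ≤ M) :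
    Tendsto (fun a : ℝ => (1 + a) * ∫ x in (0 : ℝ)..Λ, x ^ a * f x)
      (nhdsWithin (-1) (Set.Ioi (-1))) (nhds (f 0)) := by
  obtain ⟨M, hM⟩ := hbdd
  set l : Filter ℝ := nhdsWithin (-1) (Set.Ioi (-1)) with hl
  set C : ℝ := M + |f 0| with hCdef
  have hC : ∀ x ∈ Set.Ioc (0:ℝ) Λ, |f x - f 0| ≤ C := by
    intro x hx
    calc |f x - f 0| ≤ |f x| + |f 0| := abs_sub _ _
      _ ≤ M + |f 0| := by
        gcongr; exact hM x ⟨hx.1.le, hx.2⟩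
  have hC0 : 0 ≤ C := le_trans (abs_nonneg _) (hC Λ ⟨hΛ, le_refl Λ⟩)
  -- the sub-function g x = f x - f 0 is measurable
  have hgmeas : Measurable (fun x => f x - f 0) := hmeas.sub measurable_const
  -- tendsto of b ^ (a+1) to 1 for b > 0
  have hpow : ∀ {b : ℝ}, 0 < b → Tendsto (fun a : ℝ => b ^ (a + 1)) l (nhds 1) := by
    intro b hb
    have h1 : ContinuousAt (fun a : ℝ => b ^ (a + 1)) (-1) :=
      (Real.continuousAt_const_rpow hb.ne').comp (continuousAt_id.add continuousAt_const)
    have h2 : Tendsto (fun a : ℝ => b ^ (a + 1)) l (nhds (b ^ ((-1:ℝ) + 1))) :=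
      h1.tendsto.mono_left nhdsWithin_le_nhds
    simpa using h2
  -- the error term tends to 0
  have herr : Tendsto (fun a : ℝ => (1 + a) * ∫ x in (0:ℝ)..Λ, x ^ a * (f x - f 0)) l (nhds 0) := by
    rw [NormedAddCommGroup.tendsto_nhds_zero]
    intro ε hε
    obtain ⟨δ₀, hδ₀, hδ₀'⟩ := Metric.continuousWithinAt_iff.mp hcont (ε/2) (by linarith)
    set δ : ℝ := min (δ₀/2) Λ with hδdef
    have hδpos : 0 < δ := lt_min (by linarith) hΛ
    have hδΛ : δ ≤ Λ := min_le_right _ _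
    have hδlt : δ < δ₀ := lt_of_le_of_lt (min_le_left _ _) (by linarith)
    have hsmall : ∀ x ∈ Set.Ioc (0:ℝ) δ, |f x - f 0| ≤ ε/2 := by
      intro x hx
      have : dist (f x) (f 0) < ε/2 := by
        refine hδ₀' hx.1.le ?_
        rw [Real.dist_eq, sub_zero, abs_of_pos hx.1]
        exact lt_of_le_of_lt hx.2 hδlt
      rw [Real.dist_eq] at this
      exact this.le
    -- the bound function
    have hB : Tendsto (fun a : ℝ => ε/2 * δ ^ (a+1) + C * (Λ ^ (a+1) - δ ^ (a+1))) l
        (nhds (ε/2)) := by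
      have := ((hpow hδpos).const_mul (ε/2)).add
        (((hpow hΛ).sub (hpow hδpos)).const_mul C)
      simpa using this
    have hBlt : ∀ᶠ a in l, ε/2 * δ ^ (a+1) + C * (Λ ^ (a+1) - δ ^ (a+1)) < ε :=
      hB.eventually_lt_const (by linarith)
    filter_upwards [self_mem_nhdsWithin, hBlt] with a ha hBa
    rw [Set.mem_Ioi] at ha
    have ha1 : 0 < a + 1 := by linarith
    have hane : a + 1 ≠ 0 := ha1.ne'
    -- integrability pieces
    have hintΛ : IntervalIntegrable (fun x => x ^ a * (f x - f 0)) MeasureTheory.volume 0 Λ :=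
      aux_integ hgmeas ha hΛ.le hC
    have hsub : Set.uIcc 0 δ ⊆ Set.uIcc 0 Λ := by
      rw [Set.uIcc_of_le hδpos.le, Set.uIcc_of_le hΛ.le]
      exact Set.Icc_subset_Icc le_rfl hδΛ
    have hsub2 : Set.uIcc δ Λ ⊆ Set.uIcc 0 Λ := by
      rw [Set.uIcc_of_le hδΛ, Set.uIcc_of_le hΛ.le]
      exact Set.Icc_subset_Icc hδpos.le le_rfl
    have hint1 : IntervalIntegrable (fun x => x ^ a * (f x - f 0)) MeasureTheory.volume 0 δ :=
      hintΛ.mono_set hsub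
    have hint2 : IntervalIntegrable (fun x => x ^ a * (f x - f 0)) MeasureTheory.volume δ Λ :=
      hintΛ.mono_set hsub2
    -- integral of x^a over pieces
    have hrpow1 : ∫ x in (0:ℝ)..δ, x ^ a = δ ^ (a+1) / (a+1) := by
      rw [integral_rpow (Or.inl ha), Real.zero_rpow hane, sub_zero]
    have hrpow2 : ∫ x in δ..Λ, x ^ a = (Λ ^ (a+1) - δ ^ (a+1)) / (a+1) := by
      rw [integral_rpow (Or.inl ha)]
    -- bound on first piece
    have hbd1 : |∫ x in (0:ℝ)..δ, x ^ a * (f x - f 0)| ≤ ε/2 * (δ ^ (a+1) / (a+1)) := by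
      have hmono : ∀ᵐ t ∂(MeasureTheory.volume.restrict (Set.uIoc 0 δ)),
          ‖t ^ a * (f t - f 0)‖ ≤ t ^ a * (ε/2) := by
        rw [Set.uIoc_of_le hδpos.le]
        refine MeasureTheory.ae_restrict_of_forall_mem measurableSet_Ioc fun x hx => ?_
        have hxpos : 0 < x ^ a := Real.rpow_pos_of_pos hx.1 a
        rw [Real.norm_eq_abs, abs_mul, abs_of_pos hxpos]
        exact mul_le_mul_of_nonneg_left (hsmall x hx) hxpos.le
      have hintc : IntervalIntegrable (fun x => x ^ a * (ε/2)) MeasureTheory.volume 0 δ :=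
        (intervalIntegral.intervalIntegrable_rpow' ha).mul_const _
      have := intervalIntegral.norm_integral_le_abs_of_norm_le hmono hintc
      rw [Real.norm_eq_abs] at this
      refine this.trans ?_
      rw [intervalIntegral.integral_mul_const, hrpow1]
      rw [abs_of_nonneg (by positivity)]
      ring_nf
      exact le_refl _
    -- bound on second piece
    have hbd2 : |∫ x in δ..Λ, x ^ a * (f x - f 0)| ≤ C * ((Λ ^ (a+1) - δ ^ (a+1)) / (a+1)) := by
      have hmono : ∀ᵐ t ∂(MeasureTheory.volume.restrict (Set.uIoc δ Λ)),
          ‖t ^ a * (f t - f 0)‖ ≤ t ^ a * C := by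
        rw [Set.uIoc_of_le hδΛ]
        refine MeasureTheory.ae_restrict_of_forall_mem measurableSet_Ioc fun x hx => ?_
        have hxpos : 0 < x ^ a := Real.rpow_pos_of_pos (lt_of_lt_of_le hδpos hx.1.le) a
        rw [Real.norm_eq_abs, abs_mul, abs_of_pos hxpos]
        exact mul_le_mul_of_nonneg_left (hC x ⟨lt_of_lt_of_le hδpos hx.1.le, hx.2⟩) hxpos.le
      have hintc : IntervalIntegrable (fun x => x ^ a * C) MeasureTheory.volume δ Λ :=
        (intervalIntegral.intervalIntegrable_rpow' ha).mul_const _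
      have := intervalIntegral.norm_integral_le_abs_of_norm_le hmono hintc
      rw [Real.norm_eq_abs] at this
      refine this.trans ?_
      rw [intervalIntegral.integral_mul_const, hrpow2]
      have hnn : 0 ≤ (Λ ^ (a+1) - δ ^ (a+1)) / (a+1) := by
        apply div_nonneg _ ha1.le
        have := Real.rpow_le_rpow hδpos.le hδΛ ha1.le
        linarith
      rw [abs_of_nonneg (mul_nonneg hnn hC0)]
      rw [mul_comm]
    -- combine
    have hsplit : (∫ x in (0:ℝ)..δ, x ^ a * (f x - f 0)) + ∫ x in δ..Λ, x ^ a * (f x - f 0)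
        = ∫ x in (0:ℝ)..Λ, x ^ a * (f x - f 0) :=
      intervalIntegral.integral_add_adjacent_intervals hint1 hint2
    rw [Real.norm_eq_abs, abs_mul, abs_of_pos (by linarith : (0:ℝ) < 1 + a), ← hsplit]
    calc (1 + a) * |(∫ x in (0:ℝ)..δ, x ^ a * (f x - f 0)) + ∫ x in δ..Λ, x ^ a * (f x - f 0)|
        ≤ (1 + a) * (ε/2 * (δ ^ (a+1) / (a+1)) + C * ((Λ ^ (a+1) - δ ^ (a+1)) / (a+1))) := by
          exact mul_le_mul_of_nonneg_left
            ((abs_add_le _ _).trans (add_le_add hbd1 hbd2)) (by linarith)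
      _ = ε/2 * δ ^ (a+1) + C * (Λ ^ (a+1) - δ ^ (a+1)) := by
          field_simp
          ring
      _ < ε := hBa
  -- main term
  have hmain : Tendsto (fun a : ℝ => f 0 * Λ ^ (a+1)) l (nhds (f 0)) := by
    have := (hpow hΛ).const_mul (f 0)
    simpa using this
  have htot := hmain.add herr
  rw [add_zero] at htot
  refine htot.congr' ?_
  filter_upwards [self_mem_nhdsWithin] with a ha
  rw [Set.mem_Ioi] at ha
  have ha1 : 0 < a + 1 := by linarith
  have hane : a + 1 ≠ 0 := ha1.ne'
  have hintf : IntervalIntegrable (fun x => x ^ a * f x) MeasureTheory.volume 0 Λ := by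
    refine aux_integ hmeas ha hΛ.le fun x hx => hM x ⟨hx.1.le, hx.2⟩
  have hintg : IntervalIntegrable (fun x => x ^ a * (f x - f 0)) MeasureTheory.volume 0 Λ :=
    aux_integ hgmeas ha hΛ.le hC
  have hintc : IntervalIntegrable (fun x => x ^ a * f 0) MeasureTheory.volume 0 Λ :=
    (intervalIntegral.intervalIntegrable_rpow' ha).mul_const _
  have hsplit : (∫ x in (0:ℝ)..Λ, x ^ a * (f x - f 0))
      = (∫ x in (0:ℝ)..Λ, x ^ a * f x) - ∫ x in (0:ℝ)..Λ, x ^ a * f 0 := by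
    rw [← intervalIntegral.integral_sub hintf hintc]
    congr 1; ext x; ring
  have hconst : ∫ x in (0:ℝ)..Λ, x ^ a * f 0 = Λ ^ (a+1) / (a+1) * f 0 := by
    rw [intervalIntegral.integral_mul_const, integral_rpow (Or.inl ha),
      Real.zero_rpow hane, sub_zero]
  rw [hsplit, hconst]
  field_simp
  ring
end

section
/- Fix integers N ≥ 1, m ≥ 1, 0 ≤ k₁,k₂,k₃ ≤ k ≤ N with k₁+k₂+k₃ = 2k; set n = mN−k. Let P = 𝐏_m^{(N|k₁,k₂,k₃)}(x₁,x₂,x₃|t₁,…,t_n) be the symmetrization over (t₁,…,t_n) of the basic monomial p(x₁,x₂,x₃|t₁,…,t_n) = ∏_{q=1}^N ∏_{i<j∈s_q}(t_i−t_j)² · ∏_{j∈χ₁}(t_j−x₂)(t_j−x₃) · ∏_{j∈χ₂}(t_j−x₁)(t_j−x₃) · ∏_{j∈χ₃}(t_j−x₁)(t_j−x₂). Then P(x₁,x₂,x₃ | x,…,x (N+1 copies), t₁,…,t_{n−N−1}) = 0 identically. -/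
open Finset

/-- The basic monomial `p(x₁,x₂,x₃|t₁,…,t_n)` of the parafermionic polynomial.
The `n` variables are divided into `N` groups by `grp`; the group of index `q`
belongs to the set `χ_{chi q + 1}` (value `3` meaning the set `χ₄`). -/
def basicMonomial (n N : ℕ) (grp : Fin n → Fin N) (chi : Fin N → Fin 4)
    (x : Fin 3 → ℝ) (t : Fin n → ℝ) : ℝ :=
  (∏ i : Fin n, ∏ j : Fin n, if i < j ∧ grp i = grp j then (t i - t j) ^ 2 else 1) *
  ∏ j : Fin n,
    (if chi (grp j) = 0 then (t j - x 1) * (t j - x 2)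
     else if chi (grp j) = 1 then (t j - x 0) * (t j - x 2)
     else if chi (grp j) = 2 then (t j - x 0) * (t j - x 1)
     else 1)

/-- The symmetrization of the basic monomial over the variables `t₁,…,t_n`. -/
def symMonomial (n N : ℕ) (grp : Fin n → Fin N) (chi : Fin N → Fin 4)
    (x : Fin 3 → ℝ) (t : Fin n → ℝ) : ℝ :=
  ∑ σ : Equiv.Perm (Fin n), basicMonomial n N grp chi x (t ∘ σ)

/-- The configuration data of the parafermionic polynomial `𝐏_m^{(N|k₁,k₂,k₃)}`:
the groups in `χ₄` (i.e. `chi q = 3`) have `m` elements, the others `m−1` elements;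
`χ₁, χ₂, χ₃` contain `k−k₁`, `k−k₂`, `k−k₃` groups and `χ₄` contains `N−k` groups. -/
def validConfig (n N m k k1 k2 k3 : ℕ) (grp : Fin n → Fin N) (chi : Fin N → Fin 4) : Prop :=
  (∀ q : Fin N,
      (chi q = 3 → (Finset.univ.filter fun i => grp i = q).card = m) ∧
      (chi q ≠ 3 → (Finset.univ.filter fun i => grp i = q).card = m - 1)) ∧
  (Finset.univ.filter fun q => chi q = 0).card = k - k1 ∧
  (Finset.univ.filter fun q => chi q = 1).card = k - k2 ∧
  (Finset.univ.filter fun q => chi q = 2).card = k - k3 ∧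
  (Finset.univ.filter fun q => chi q = 3).card = N - k

/-- Clustering property: the symmetrized parafermionic polynomial
`𝐏_m^{(N|k₁,k₂,k₃)}(x₁,x₂,x₃|t)` vanishes when `N+1` of the `t`-variables coincide. -/
theorem symMonomial_cluster_vanishing (N m k k1 k2 k3 : ℕ) (hN : 1 ≤ N) (hm : 1 ≤ m)
    (hk : k ≤ N) (hk1 : k1 ≤ k) (hk2 : k2 ≤ k) (hk3 : k3 ≤ k)
    (hsum : k1 + k2 + k3 = 2 * k) (hn1 : N + 1 ≤ m * N - k)
    (grp : Fin (m * N - k) → Fin N) (chi : Fin N → Fin 4)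
    (hcfg : validConfig (m * N - k) N m k k1 k2 k3 grp chi)
    (x : Fin 3 → ℝ) (t : Fin (m * N - k) → ℝ) (c : ℝ)
    (ht : ∀ i : Fin (m * N - k), (i : ℕ) < N + 1 → t i = c) :
    symMonomial (m * N - k) N grp chi x t = 0 := by
  unfold symMonomial
  apply Finset.sum_eq_zero
  intro σ _
  unfold basicMonomial
  -- the set of indices whose image under σ is among the first N+1 coordinates
  set S : Finset (Fin (m * N - k)) := Finset.univ.filter (fun i => ((σ i : ℕ) < N + 1)) with hS
  have hsub : (Finset.univ.image fun a : Fin (N + 1) => σ.symm (Fin.castLE hn1 a)) ⊆ S := by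
    intro i hi
    simp only [Finset.mem_image, Finset.mem_univ, true_and] at hi
    obtain ⟨a, ha⟩ := hi
    simp only [hS, Finset.mem_filter, Finset.mem_univ, true_and, ← ha,
      Equiv.apply_symm_apply]
    exact a.isLt
  have hinj : Function.Injective fun a : Fin (N + 1) => σ.symm (Fin.castLE hn1 a) := by
    intro a b hab
    have := σ.symm.injective hab
    exact Fin.castLE_injective hn1 this
  have hcard : N + 1 ≤ S.card := by
    calc N + 1 = (Finset.univ.image fun a : Fin (N + 1) => σ.symm (Fin.castLE hn1 a)).card := by
          rw [Finset.card_image_of_injective _ hinj, Finset.card_univ, Fintype.card_fin]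
      _ ≤ S.card := Finset.card_le_card hsub
  -- pigeonhole: two elements of S in the same group
  have hlt : (Finset.univ : Finset (Fin N)).card < S.card := by
    rw [Finset.card_univ, Fintype.card_fin]; omega
  obtain ⟨i, hi, j, hj, hij, hgrp⟩ :=
    Finset.exists_ne_map_eq_of_card_lt_of_maps_to hlt
      (fun a (_ : a ∈ S) => Finset.mem_univ (grp a))
  have hti : t (σ i) = c := ht _ (by simpa [hS, Finset.mem_filter] using hi)
  have htj : t (σ j) = c := ht _ (by simpa [hS, Finset.mem_filter] using hj)
  -- WLOG i < j
  rcases hij.lt_or_gt with hlt' | hlt'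
  · apply mul_eq_zero_of_left
    apply Finset.prod_eq_zero (Finset.mem_univ i)
    apply Finset.prod_eq_zero (Finset.mem_univ j)
    rw [if_pos ⟨hlt', hgrp⟩]
    simp [Function.comp, hti, htj]
  · apply mul_eq_zero_of_left
    apply Finset.prod_eq_zero (Finset.mem_univ j)
    apply Finset.prod_eq_zero (Finset.mem_univ i)
    rw [if_pos ⟨hlt', hgrp.symm⟩]
    simp [Function.comp, hti, htj]
end

section
/- With the notation of the parafermionic polynomial: fix N ≥ 1, m ≥ 1, 0 ≤ k_j ≤ k ≤ N with k₁+k₂+k₃=2k, n = mN−k, and let P(x₁,x₂,x₃|t₁,…,t_n) be the symmetrization over the t-variables of the basic monomial p defined via groups s_q and sets χ₁,χ₂,χ₃. Then for each j ∈ {1,2,3}, P(x₁,x₂,x₃ | x_j,…,x_j (N+1−k_j copies), t₁,…,t_{n+k_j−N−1}) = 0 identically. -/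
open Finset

lemma basic_eq_zero {n N : ℕ} (grp : Fin n → Fin N) (chi : Fin N → Fin 4)
    (x : Fin 3 → ℝ) (u : Fin n → ℝ) (a : Fin 3)
    (T : Finset (Fin n)) (hu : ∀ j ∈ T, u j = x a)
    (hcard : (Finset.univ.filter fun q => chi q = Fin.castSucc a ∨ chi q = 3).card < T.card) :
    basicMonomial n N grp chi x u = 0 := by
  by_cases hinj : Set.InjOn grp T
  · have himg : (T.image grp).card = T.card := Finset.card_image_of_injOn hinj
    have hns : ¬ (T.image grp ⊆
        Finset.univ.filter fun q => chi q = Fin.castSucc a ∨ chi q = 3) := by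
      intro hsub
      have := Finset.card_le_card hsub
      omega
    obtain ⟨q, hq, hq2⟩ := Finset.not_subset.mp hns
    obtain ⟨j, hjT, hjq⟩ := Finset.mem_image.mp hq
    simp only [Finset.mem_filter, Finset.mem_univ, true_and, not_or] at hq2
    obtain ⟨hqa, hq3⟩ := hq2
    unfold basicMonomial
    apply mul_eq_zero_of_right
    apply Finset.prod_eq_zero (Finset.mem_univ j)
    have huj : u j = x a := hu j hjT
    rw [hjq]
    obtain ⟨c, hcc⟩ : ∃ c, chi q = c := ⟨_, rfl⟩
    rw [hcc] at hqa hq3 ⊢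
    fin_cases a <;> fin_cases c <;> simp [huj, Fin.ext_iff] at hqa hq3 ⊢
  · rw [Set.InjOn] at hinj
    push_neg at hinj
    obtain ⟨j1, hj1, j2, hj2, heq, hne⟩ := hinj
    simp only [Finset.mem_coe] at hj1 hj2
    unfold basicMonomial
    apply mul_eq_zero_of_left
    rcases lt_or_gt_of_ne hne with h | h
    · apply Finset.prod_eq_zero (Finset.mem_univ j1)
      apply Finset.prod_eq_zero (Finset.mem_univ j2)
      rw [if_pos ⟨h, heq⟩, hu j1 hj1, hu j2 hj2]; ring
    · apply Finset.prod_eq_zero (Finset.mem_univ j2)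
      apply Finset.prod_eq_zero (Finset.mem_univ j1)
      rw [if_pos ⟨h, heq.symm⟩, hu j1 hj1, hu j2 hj2]; ring

/-- Clustering at the special points: the symmetrized parafermionic polynomial
`𝐏_m^{(N|k₁,k₂,k₃)}(x₁,x₂,x₃|t)` vanishes when `N+1−k_j` of the `t`-variables are set
equal to `x_j`, for each `j ∈ {1,2,3}`. -/
theorem symMonomial_cluster_vanishing_at_special_points (N m k k1 k2 k3 : ℕ)
    (hN : 1 ≤ N) (hm : 1 ≤ m)
    (hk : k ≤ N) (hk1 : k1 ≤ k) (hk2 : k2 ≤ k) (hk3 : k3 ≤ k)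
    (hsum : k1 + k2 + k3 = 2 * k)
    (grp : Fin (m * N - k) → Fin N) (chi : Fin N → Fin 4)
    (hcfg : validConfig (m * N - k) N m k k1 k2 k3 grp chi)
    (a : Fin 3) (hna : N + 1 ≤ m * N - k + ![k1, k2, k3] a)
    (x : Fin 3 → ℝ) (t : Fin (m * N - k) → ℝ)
    (ht : ∀ i : Fin (m * N - k), (i : ℕ) < N + 1 - ![k1, k2, k3] a → t i = x a) :
    symMonomial (m * N - k) N grp chi x t = 0 := by
  obtain ⟨hgrp, h0, h1, h2, h3⟩ := hcfg
  unfold symMonomial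
  apply Finset.sum_eq_zero
  intro σ _
  set c := N + 1 - ![k1, k2, k3] a with hc
  have hcn : c ≤ m * N - k := by omega
  have hlt : ∀ p ∈ Finset.range c, p < m * N - k :=
    fun p hp => lt_of_lt_of_le (Finset.mem_range.mp hp) hcn
  set T : Finset (Fin (m * N - k)) := ((Finset.range c).attachFin hlt).image ⇑σ⁻¹ with hT
  have hTcard : T.card = c := by
    rw [hT, Finset.card_image_of_injective _ (Equiv.injective _), Finset.card_attachFin,
      Finset.card_range]
  apply basic_eq_zero grp chi x _ a T
  · intro j hj
    obtain ⟨i, hi, rfl⟩ := Finset.mem_image.mp hj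
    have hic : (i : ℕ) < c := Finset.mem_range.mp ((Finset.mem_attachFin hlt).mp hi)
    simp only [Function.comp_apply, Equiv.Perm.inv_def, Equiv.apply_symm_apply]
    exact ht i hic
  · have hdisj : Disjoint (Finset.univ.filter fun q => chi q = Fin.castSucc a)
        (Finset.univ.filter fun q => chi q = 3) := by
      rw [Finset.disjoint_filter]
      intro q _ h
      rw [h]
      fin_cases a <;> decide
    have hunion : (Finset.univ.filter fun q => chi q = Fin.castSucc a ∨ chi q = 3) =
        (Finset.univ.filter fun q => chi q = Fin.castSucc a) ∪
        (Finset.univ.filter fun q => chi q = 3) := Finset.filter_or _ _ _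
    rw [hunion, Finset.card_union_of_disjoint hdisj, h3, hTcard]
    have hA : (Finset.univ.filter fun q => chi q = Fin.castSucc a).card = k - ![k1, k2, k3] a := by
      fin_cases a <;> simp only [Fin.castSucc, Matrix.cons_val_zero, Matrix.cons_val_one,
        Matrix.head_cons, Matrix.cons_val_two, Matrix.tail_cons]
      · exact h0
      · exact h1
      · exact h2
    rw [hA, hc]
    have hak : ![k1, k2, k3] a ≤ k := by fin_cases a <;> simpa
    omega
end

section
/- Fix integers N ≥ 1 and m ≥ 2, let n = mN, and let P(t₁,…,t_n) be the symmetrization of the monomial ∏_{q=1}^N ∏_{i<j∈s_q}(t_i−t_j)², where s₁,…,s_N is a partition of the n variables into N groups of size m. For a nonnegative integer g, expand D(t₁,…,t_n) = ∏_{i<j}(t_i−t_j)^{2g} · P(t₁,…,t_n) = Σ c_{ν₁,…,ν_n} t₁^{ν₁}⋯t_n^{ν_n}. Then for any monomial with c_{ν₁,…,ν_n} ≠ 0 and exponents ordered ν₁ ≤ ν₂ ≤ … ≤ ν_n, writing each index as pN+j with 0 ≤ p ≤ m−1 and 1 ≤ j ≤ N, one has p + (pN+j−1)g ≤ ν_{pN+j}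 ≤ (m+p−1) + ((m+p)N+j−2)g. -/
open MvPolynomial Finset

/-- `D(t₁,…,t_n) = ∏_{i<j}(t_i−t_j)^{2g} · P(t₁,…,t_n)` as a polynomial, where `P` is the
symmetrization of `∏_q ∏_{i<j∈s_q}(t_i−t_j)²` over a grouping `grp` of the `n` variables
into `N` groups. -/
noncomputable def Dpoly (n N g : ℕ) (grp : Fin n → Fin N) : MvPolynomial (Fin n) ℝ :=
  (∏ i : Fin n, ∏ j : Fin n, if i < j then (X i - X j) ^ (2 * g) else 1) *
    ∑ σ : Equiv.Perm (Fin n), ∏ i : Fin n, ∏ j : Fin n,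
      if i < j ∧ grp i = grp j then (X (σ i) - X (σ j)) ^ 2 else 1

section Helpers

lemma support_one_eq {n : ℕ} : ∀ d ∈ (1 : MvPolynomial (Fin n) ℝ).support, d = 0 := by
  classical
  intro d hd
  have := MvPolynomial.mem_support_iff.mp hd
  rw [MvPolynomial.coeff_one] at this
  by_contra hne
  simp [Ne.symm hne] at this

lemma prod_support_bound {ι : Type*} {n : ℕ} (s : Finset ι)
    (f : ι → MvPolynomial (Fin n) ℝ) (w W : ι → ℕ) (S : Finset (Fin n))
    (h : ∀ a ∈ s, ∀ d ∈ (f a).support, w a ≤ ∑ j ∈ S, d j ∧ ∑ j ∈ S, d j ≤ W a) :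
    ∀ d ∈ (∏ a ∈ s, f a).support,
      (∑ a ∈ s, w a) ≤ ∑ j ∈ S, d j ∧ ∑ j ∈ S, d j ≤ ∑ a ∈ s, W a := by
  classical
  induction s using Finset.cons_induction with
  | empty =>
      intro d hd
      rw [Finset.prod_empty] at hd
      have hd0 : d = 0 := support_one_eq d hd
      subst hd0; simp
  | cons a s ha ih =>
      intro d hd
      rw [Finset.prod_cons] at hd
      obtain ⟨d1, hd1, d2, hd2, rfl⟩ := Finset.mem_add.mp (MvPolynomial.support_mul _ _ hd)
      have h1 := h a (Finset.mem_cons_self a s) d1 hd1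
      have h2 := ih (fun b hb => h b (Finset.mem_cons.mpr (Or.inr hb))) d2 hd2
      have hsum : ∑ j ∈ S, (d1 + d2) j = (∑ j ∈ S, d1 j) + ∑ j ∈ S, d2 j := by
        simp [Finsupp.add_apply, Finset.sum_add_distrib]
      rw [Finset.sum_cons, Finset.sum_cons, hsum]
      omega

lemma single_sum {n : ℕ} (a : Fin n) (S : Finset (Fin n)) :
    ∑ j ∈ S, (Finsupp.single a 1 : Fin n →₀ ℕ) j = if a ∈ S then 1 else 0 := by
  simp [Finsupp.single_apply]

lemma sub_support {n : ℕ} (a b : Fin n) :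
    (X a - X b : MvPolynomial (Fin n) ℝ).support ⊆
      {Finsupp.single a 1, Finsupp.single b 1} := by
  classical
  intro d hd
  have h1 := MvPolynomial.support_add (p := (X a : MvPolynomial (Fin n) ℝ)) (q := -X b)
    (sub_eq_add_neg (X a : MvPolynomial (Fin n) ℝ) (X b) ▸ hd)
  rw [MvPolynomial.support_neg, MvPolynomial.support_X, MvPolynomial.support_X] at h1
  simpa using h1

lemma sub_pow_support_bound {n : ℕ} (a b : Fin n) (e : ℕ) (S : Finset (Fin n)) :
    ∀ d ∈ ((X a - X b : MvPolynomial (Fin n) ℝ) ^ e).support,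
      (if a ∈ S ∧ b ∈ S then e else 0) ≤ ∑ j ∈ S, d j ∧
        ∑ j ∈ S, d j ≤ (if a ∈ S ∨ b ∈ S then e else 0) := by
  classical
  intro d hd
  have hp : (X a - X b : MvPolynomial (Fin n) ℝ) ^ e
      = ∏ _x ∈ Finset.range e, (X a - X b) := by simp
  rw [hp] at hd
  have := prod_support_bound (Finset.range e) (fun _ => (X a - X b : MvPolynomial (Fin n) ℝ))
    (fun _ => if a ∈ S ∧ b ∈ S then 1 else 0) (fun _ => if a ∈ S ∨ b ∈ S then 1 else 0) S
    (by
      intro c _ d' hd'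
      rcases Finset.mem_insert.mp (sub_support a b hd') with rfl | h2
      · rw [single_sum]; constructor <;> split_ifs <;> first | omega | tauto
      · rw [Finset.mem_singleton] at h2; subst h2
        rw [single_sum]; constructor <;> split_ifs <;> first | omega | tauto) d hd
  simpa using this

lemma vand_support_bound {n g : ℕ} (S : Finset (Fin n)) :
    ∀ d ∈ (∏ i : Fin n, ∏ j : Fin n,
        if i < j then ((X i - X j : MvPolynomial (Fin n) ℝ)) ^ (2 * g) else 1).support,
      (∑ i : Fin n, ∑ j : Fin n, if i < j ∧ i ∈ S ∧ j ∈ S then 2 * g else 0) ≤ ∑ j ∈ S, d j ∧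
        ∑ j ∈ S, d j ≤ ∑ i : Fin n, ∑ j : Fin n,
          if i < j ∧ (i ∈ S ∨ j ∈ S) then 2 * g else 0 := by
  classical
  refine prod_support_bound Finset.univ _
    (fun i => ∑ j : Fin n, if i < j ∧ i ∈ S ∧ j ∈ S then 2 * g else 0)
    (fun i => ∑ j : Fin n, if i < j ∧ (i ∈ S ∨ j ∈ S) then 2 * g else 0) S ?_
  intro a _
  refine prod_support_bound Finset.univ _
    (fun j => if a < j ∧ a ∈ S ∧ j ∈ S then 2 * g else 0)
    (fun j => if a < j ∧ (a ∈ S ∨ j ∈ S) then 2 * g else 0) S ?_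
  intro b _ d hd
  by_cases hab : a < b
  · rw [if_pos hab] at hd
    have := sub_pow_support_bound a b (2 * g) S d hd
    constructor
    · refine le_trans (le_of_eq ?_) this.1
      simp [hab]
    · refine le_trans this.2 (le_of_eq ?_)
      simp [hab]
  · rw [if_neg hab] at hd
    have hd0 : d = 0 := support_one_eq d hd
    subst hd0
    simp [hab]

lemma grp_support_bound {n N : ℕ} (grp : Fin n → Fin N) (σ : Equiv.Perm (Fin n))
    (S : Finset (Fin n)) :
    ∀ d ∈ (∏ i : Fin n, ∏ j : Fin n,
        if i < j ∧ grp i = grp j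
          then ((X (σ i) - X (σ j) : MvPolynomial (Fin n) ℝ)) ^ 2 else 1).support,
      (∑ i : Fin n, ∑ j : Fin n,
          if (i < j ∧ grp i = grp j) ∧ σ i ∈ S ∧ σ j ∈ S then 2 else 0) ≤ ∑ j ∈ S, d j ∧
        ∑ j ∈ S, d j ≤ ∑ i : Fin n, ∑ j : Fin n,
          if (i < j ∧ grp i = grp j) ∧ (σ i ∈ S ∨ σ j ∈ S) then 2 else 0 := by
  classical
  refine prod_support_bound Finset.univ _
    (fun i => ∑ j : Fin n, if (i < j ∧ grp i = grp j) ∧ σ i ∈ S ∧ σ j ∈ S then 2 else 0)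
    (fun i => ∑ j : Fin n, if (i < j ∧ grp i = grp j) ∧ (σ i ∈ S ∨ σ j ∈ S) then 2 else 0) S ?_
  intro a _
  refine prod_support_bound Finset.univ _
    (fun j => if (a < j ∧ grp a = grp j) ∧ σ a ∈ S ∧ σ j ∈ S then 2 else 0)
    (fun j => if (a < j ∧ grp a = grp j) ∧ (σ a ∈ S ∨ σ j ∈ S) then 2 else 0) S ?_
  intro b _ d hd
  by_cases hab : a < b ∧ grp a = grp b
  · rw [if_pos hab] at hd
    have := sub_pow_support_bound (σ a) (σ b) 2 S d hd
    constructor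
    · refine le_trans (le_of_eq ?_) this.1
      simp [hab]
    · refine le_trans this.2 (le_of_eq ?_)
      simp [hab]
  · rw [if_neg hab] at hd
    have hd0 : d = 0 := support_one_eq d hd
    subst hd0
    simp [hab]

end Helpers

section Counting

lemma mul_pred_add (c : ℕ) : c * (c - 1) + c = c * c := by
  cases c with
  | zero => rfl
  | succ t => simp [Nat.succ_sub_one]; ring

lemma cast_mul_pred (a : ℕ) : ((a * (a - 1) : ℕ) : ℤ) = a * a - a := by
  cases a with
  | zero => simp
  | succ t => push_cast [Nat.succ_sub_one]; ring

lemma strip_mem {α : Type*} [Fintype α] [DecidableEq α] (T : Finset α)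
    (P : α → α → Prop) [DecidableRel P] (c : ℕ) :
    (∑ i : α, ∑ j : α, if P i j ∧ i ∈ T ∧ j ∈ T then c else 0)
      = ∑ i ∈ T, ∑ j ∈ T, if P i j then c else 0 := by
  rw [← Finset.sum_subset (Finset.subset_univ T)
    (fun x _ hx => by
      apply Finset.sum_eq_zero; intro j _
      simp [hx])]
  refine Finset.sum_congr rfl fun i hi => ?_
  rw [← Finset.sum_subset (Finset.subset_univ T) (fun x _ hx => by simp [hx])]
  exact Finset.sum_congr rfl fun j hj => by simp [hi, hj]

lemma pairs_core {α : Type*} [DecidableEq α] [LinearOrder α] (T : Finset α) :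
    2 * (∑ i ∈ T, ∑ j ∈ T, if i < j then 1 else 0) = T.card * (T.card - 1) := by
  have hswap : (∑ i ∈ T, ∑ j ∈ T, if i < j then (1:ℕ) else 0)
      = ∑ i ∈ T, ∑ j ∈ T, if j < i then 1 else 0 := Finset.sum_comm
  have key : (∑ i ∈ T, ∑ j ∈ T, if i < j then (1:ℕ) else 0)
      + (∑ i ∈ T, ∑ j ∈ T, if j < i then (1:ℕ) else 0)
      = ∑ i ∈ T, ∑ j ∈ T, if i ≠ j then 1 else 0 := by
    rw [← Finset.sum_add_distrib]
    refine Finset.sum_congr rfl fun i _ => ?_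
    rw [← Finset.sum_add_distrib]
    refine Finset.sum_congr rfl fun j _ => ?_
    rcases lt_trichotomy i j with h | h | h
    · simp [h, h.ne, asymm h]
    · subst h; simp
    · simp [h, h.ne', asymm h]
  have inner : ∀ i ∈ T, (∑ j ∈ T, if i ≠ j then (1:ℕ) else 0) = T.card - 1 := by
    intro i hi
    have h1 : (∑ j ∈ T, if i = j then (1:ℕ) else 0) = 1 := by
      rw [Finset.sum_ite_eq]; simp [hi]
    have h2 : (∑ j ∈ T, if i ≠ j then (1:ℕ) else 0)
        + (∑ j ∈ T, if i = j then (1:ℕ) else 0) = T.card := by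
      rw [← Finset.sum_add_distrib, Finset.card_eq_sum_ones]
      refine Finset.sum_congr rfl fun j _ => ?_
      by_cases h : i = j <;> simp [h]
    have hcard : 1 ≤ T.card := Finset.card_pos.mpr ⟨i, hi⟩
    omega
  rw [two_mul]
  nth_rewrite 2 [hswap]
  rw [key, Finset.sum_congr rfl inner, Finset.sum_const, smul_eq_mul]

lemma pairs_core_c {α : Type*} [DecidableEq α] [LinearOrder α] (T : Finset α) (c : ℕ) :
    2 * (∑ i ∈ T, ∑ j ∈ T, if i < j then c else 0) = c * (T.card * (T.card - 1)) := by
  have h : (∑ i ∈ T, ∑ j ∈ T, if i < j then c else 0)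
      = c * ∑ i ∈ T, ∑ j ∈ T, if i < j then 1 else 0 := by
    simp_rw [Finset.mul_sum, mul_ite, mul_one, mul_zero]
  rw [h, ← pairs_core T]; ring

lemma count_V {n : ℕ} (S : Finset (Fin n)) (c : ℕ) :
    2 * (∑ i : Fin n, ∑ j : Fin n, if i < j ∧ i ∈ S ∧ j ∈ S then c else 0)
      = c * (S.card * (S.card - 1)) := by
  rw [strip_mem S (· < ·) c, pairs_core_c]

lemma count_grp {n N : ℕ} (grp : Fin n → Fin N) (T : Finset (Fin n)) (c : ℕ) :
    2 * (∑ i : Fin n, ∑ j : Fin n, if (i < j ∧ grp i = grp j) ∧ i ∈ T ∧ j ∈ T then c else 0)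
      = c * ∑ q : Fin N,
          ((T.filter fun x => grp x = q).card * ((T.filter fun x => grp x = q).card - 1)) := by
  rw [strip_mem T (fun i j => i < j ∧ grp i = grp j) c]
  have h1 : ∀ i ∈ T, (∑ j ∈ T, if i < j ∧ grp i = grp j then c else 0)
      = ∑ j ∈ T.filter (fun x => grp x = grp i), if i < j then c else 0 := by
    intro i _
    rw [Finset.sum_filter]
    refine Finset.sum_congr rfl fun j _ => ?_
    by_cases h1 : grp j = grp i <;> by_cases h2 : i < j <;>
      simp [h1, h2] <;> intro h <;> exact absurd h.symm h1
  rw [Finset.sum_congr rfl h1,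
    ← Finset.sum_fiberwise T grp
      (fun i => ∑ j ∈ T.filter (fun x => grp x = grp i), if i < j then c else 0)]
  have h2 : ∀ q ∈ (Finset.univ : Finset (Fin N)),
      (∑ i ∈ T.filter (fun x => grp x = q),
        ∑ j ∈ T.filter (fun x => grp x = grp i), if i < j then c else 0)
      = ∑ i ∈ T.filter (fun x => grp x = q),
          ∑ j ∈ T.filter (fun x => grp x = q), if i < j then c else 0 := fun q _ =>
    Finset.sum_congr rfl fun i hi => by rw [(Finset.mem_filter.mp hi).2]
  rw [Finset.sum_congr rfl h2, Finset.mul_sum, Finset.mul_sum]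
  exact Finset.sum_congr rfl fun q _ => pairs_core_c _ c

lemma count_V' {n : ℕ} (S : Finset (Fin n)) (c : ℕ) :
    2 * (∑ i : Fin n, ∑ j : Fin n, if i < j ∧ i ∈ S ∧ j ∈ S then c else 0) + c * S.card
      = c * (S.card * S.card) := by
  rw [count_V, ← Nat.mul_add, mul_pred_add]

lemma count_grp' {n N : ℕ} (grp : Fin n → Fin N) (T : Finset (Fin n)) (c : ℕ) :
    2 * (∑ i : Fin n, ∑ j : Fin n, if (i < j ∧ grp i = grp j) ∧ i ∈ T ∧ j ∈ T then c else 0)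
        + c * ∑ q : Fin N, (T.filter fun x => grp x = q).card
      = c * ∑ q : Fin N,
          ((T.filter fun x => grp x = q).card * (T.filter fun x => grp x = q).card) := by
  rw [count_grp, ← Nat.mul_add, ← Finset.sum_add_distrib]
  congr 1
  exact Finset.sum_congr rfl fun q _ => mul_pred_add _

lemma split_compl {α : Type*} [Fintype α] [DecidableEq α] (T : Finset α)
    (P : α → α → Prop) [DecidableRel P] (c : ℕ) :
    (∑ i : α, ∑ j : α, if P i j ∧ (i ∈ T ∨ j ∈ T) then c else 0)
      + (∑ i : α, ∑ j : α, if P i j ∧ i ∈ Tᶜ ∧ j ∈ Tᶜ then c else 0)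
      = ∑ i : α, ∑ j : α, if P i j then c else 0 := by
  rw [← Finset.sum_add_distrib]
  refine Finset.sum_congr rfl fun i _ => ?_
  rw [← Finset.sum_add_distrib]
  refine Finset.sum_congr rfl fun j _ => ?_
  by_cases h1 : P i j <;> by_cases h2 : i ∈ T <;> by_cases h3 : j ∈ T <;> simp [h1, h2, h3]

lemma card_preim {n : ℕ} (σ : Equiv.Perm (Fin n)) (S : Finset (Fin n)) :
    (Finset.univ.filter fun x => σ x ∈ S).card = S.card := by
  have : (Finset.univ.filter fun x => σ x ∈ S) = S.map σ.symm.toEmbedding := by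
    ext x
    simp only [Finset.mem_filter, Finset.mem_univ, true_and, Finset.mem_map,
      Equiv.coe_toEmbedding]
    constructor
    · intro h; exact ⟨σ x, h, σ.symm_apply_apply x⟩
    · rintro ⟨a, ha, rfl⟩; simpa [σ.apply_symm_apply] using ha
  rw [this, Finset.card_map]

end Counting

set_option maxHeartbeats 2000000 in
/-- Exponent inequalities for the monomials of `D` (case `k₁=k₂=k₃=0`): if the
coefficient of `t₁^{ν₁}⋯t_n^{ν_n}` is nonzero and `ν₁ ≤ … ≤ ν_n`, then for the index
written as `pN+j` (1-based, i.e. the 0-based index `i` has `p = i/N`, `pN+j−1 = i`),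
`p + (pN+j−1)g ≤ ν_{pN+j} ≤ (m+p−1) + ((m+p)N+j−2)g`. -/
theorem Dpoly_exponent_bounds (N m g : ℕ) (hN : 1 ≤ N) (hm : 2 ≤ m)
    (grp : Fin (m * N) → Fin N)
    (hsz : ∀ q : Fin N, (Finset.univ.filter fun i => grp i = q).card = m)
    (ν : Fin (m * N) → ℕ) (hmono : Monotone ν)
    (hc : MvPolynomial.coeff (Finsupp.equivFunOnFinite.symm ν) (Dpoly (m * N) N g grp) ≠ 0)
    (i : Fin (m * N)) :
    (i : ℕ) / N + (i : ℕ) * g ≤ ν i ∧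
      ν i ≤ (m - 1 + (i : ℕ) / N) + (m * N + (i : ℕ) - 1) * g := by
  classical
  set i0 : ℕ := (i : ℕ) with hi0def
  have hi0n : i0 < m * N := i.isLt
  set p : ℕ := i0 / N with hpdef
  have hNp : N * p ≤ i0 := by
    rw [hpdef, mul_comm]; exact Nat.div_mul_le_self i0 N
  have hpm : p < m := by
    rw [hpdef]
    exact Nat.div_lt_of_lt_mul (by rwa [mul_comm] at hi0n)
  have hmem : (Finsupp.equivFunOnFinite.symm ν) ∈ (Dpoly (m * N) N g grp).support :=
    MvPolynomial.mem_support_iff.mpr hc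
  rw [Dpoly] at hmem
  obtain ⟨μ, hμ, d2, hd2, hsum⟩ := Finset.mem_add.mp (MvPolynomial.support_mul _ _ hmem)
  obtain ⟨σ, -, hρ⟩ := Finset.mem_biUnion.mp (MvPolynomial.support_sum hd2)
  have hν : ∀ S : Finset (Fin (m * N)),
      ∑ j ∈ S, ν j = (∑ j ∈ S, μ j) + ∑ j ∈ S, d2 j := by
    intro S
    rw [← Finset.sum_add_distrib]
    refine Finset.sum_congr rfl fun j _ => ?_
    have h1 : (Finsupp.equivFunOnFinite.symm ν) j = ν j := by simp
    rw [← h1, ← hsum]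
    rfl
  constructor
  · -- LOWER BOUND
    set S := Finset.Iic i with hSdef
    set T := Finset.univ.filter (fun x => σ x ∈ S) with hTdef
    have hcardS : S.card = i0 + 1 := by rw [hSdef]; exact Fin.card_Iic i
    have hcardT : T.card = i0 + 1 := by rw [hTdef, card_preim]; exact hcardS
    have hV := (vand_support_bound (g := g) S μ hμ).1
    have hG := (grp_support_bound grp σ S d2 hρ).1
    have hG' : (∑ a : Fin (m * N), ∑ b : Fin (m * N),
        if (a < b ∧ grp a = grp b) ∧ a ∈ T ∧ b ∈ T then 2 else 0) ≤ ∑ j ∈ S, d2 j := by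
      refine le_trans (le_of_eq ?_) hG
      refine Finset.sum_congr rfl fun a _ => Finset.sum_congr rfl fun b _ => ?_
      refine if_congr ?_ rfl rfl
      simp [hTdef]
    set cq : Fin N → ℕ := fun q => (T.filter fun x => grp x = q).card with hcqdef
    have hcV := count_V S (2 * g)
    have hcG := count_grp grp T 2
    rw [hcardS, Nat.add_sub_cancel] at hcV
    have hQsum : ∑ q : Fin N, cq q = i0 + 1 := by
      rw [← hcardT]
      exact (Finset.card_eq_sum_card_fiberwise (fun x _ => Finset.mem_univ (grp x))).symm
    have hQQ : (∑ q : Fin N, cq q * (cq q - 1)) + (i0 + 1) = ∑ q : Fin N, cq q * cq q := by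
      rw [← hQsum, ← Finset.sum_add_distrib]
      exact Finset.sum_congr rfl fun q _ => mul_pred_add _
    have hCS : (i0 + 1) * (i0 + 1) ≤ N * ∑ q : Fin N, cq q * cq q := by
      have h := sq_sum_le_card_mul_sum_sq (s := (Finset.univ : Finset (Fin N)))
        (f := fun q => (cq q : ℕ))
      simpa [hQsum, Finset.card_univ, sq, pow_two] using h
    have hsum_le : ∑ j ∈ S, ν j ≤ (i0 + 1) * ν i := by
      have h := Finset.sum_le_card_nsmul S ν (ν i)
        (fun j hj => hmono (Finset.mem_Iic.mp hj))
      simpa [hcardS, smul_eq_mul] using h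
    -- assemble
    by_contra hcon
    push_neg at hcon
    set A := (∑ a : Fin (m * N), ∑ b : Fin (m * N),
        if a < b ∧ a ∈ S ∧ b ∈ S then 2 * g else 0) with hAdef
    set B := (∑ a : Fin (m * N), ∑ b : Fin (m * N),
        if (a < b ∧ grp a = grp b) ∧ a ∈ T ∧ b ∈ T then 2 else 0) with hBdef
    have f1 : A + B ≤ (i0 + 1) * ν i := by
      calc A + B ≤ (∑ j ∈ S, μ j) + ∑ j ∈ S, d2 j := Nat.add_le_add hV hG'
        _ = ∑ j ∈ S, ν j := (hν S).symm
        _ ≤ (i0 + 1) * ν i := hsum_le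
    -- hcV : 2*A = (2g)*((i0+1)*i0) ; hcG : 2*B = 2 * Σ cq(cq-1)
    have hcG' : 2 * B = 2 * ∑ q : Fin N, cq q * (cq q - 1) := hcG
    have hB : B = ∑ q : Fin N, cq q * (cq q - 1) := by omega
    have hmul : (i0 + 1) * (ν i + 1) ≤ (i0 + 1) * (p + i0 * g) :=
      Nat.mul_le_mul_left _ (by omega)
    have key : (∑ q : Fin N, cq q * cq q) ≤ (i0 + 1) * p := by nlinarith [f1, hcV, hB, hQQ, hmul]
    have key2 : (i0 + 1) * (i0 + 1) ≤ (N * p) * (i0 + 1) := by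
      calc (i0 + 1) * (i0 + 1) ≤ N * ∑ q : Fin N, cq q * cq q := hCS
        _ ≤ N * ((i0 + 1) * p) := Nat.mul_le_mul_left N key
        _ = (N * p) * (i0 + 1) := by ring
    have : i0 + 1 ≤ N * p := Nat.le_of_mul_le_mul_right key2 (by omega)
    omega
  · -- UPPER BOUND
    set S := Finset.Ici i with hSdef
    set T := Finset.univ.filter (fun x => σ x ∈ S) with hTdef
    obtain ⟨k, hk⟩ : ∃ k, k + i0 = m * N := ⟨m * N - i0, by omega⟩
    have hcardS : S.card = k := by rw [hSdef]; rw [Fin.card_Ici]; omega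
    have hcardT : T.card = k := by rw [hTdef, card_preim]; exact hcardS
    have hcardSc : Sᶜ.card = i0 := by
      have h := Finset.card_compl S
      rw [hcardS] at h
      simp only [Fintype.card_fin] at h
      omega
    have hcardTc : Tᶜ.card = i0 := by
      have h := Finset.card_compl T
      rw [hcardT] at h
      simp only [Fintype.card_fin] at h
      omega
    have hV := (vand_support_bound (g := g) S μ hμ).2
    have hG := (grp_support_bound grp σ S d2 hρ).2
    have hG' : (∑ j ∈ S, d2 j) ≤ ∑ a : Fin (m*N), ∑ b : Fin (m*N),
        if (a < b ∧ grp a = grp b) ∧ (a ∈ T ∨ b ∈ T) then 2 else 0 := by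
      refine le_trans hG (le_of_eq ?_)
      refine Finset.sum_congr rfl fun a _ => Finset.sum_congr rfl fun b _ => ?_
      refine if_congr ?_ rfl rfl
      simp [hTdef]
    set Av := (∑ a : Fin (m*N), ∑ b : Fin (m*N),
        if a < b ∧ (a ∈ S ∨ b ∈ S) then 2*g else 0) with hAvdef
    set Ac := (∑ a : Fin (m*N), ∑ b : Fin (m*N),
        if a < b ∧ a ∈ Sᶜ ∧ b ∈ Sᶜ then 2*g else 0) with hAcdef
    set Atot := (∑ a : Fin (m*N), ∑ b : Fin (m*N),
        if a < b then 2*g else 0) with hAtotdef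
    set Gv := (∑ a : Fin (m*N), ∑ b : Fin (m*N),
        if (a < b ∧ grp a = grp b) ∧ (a ∈ T ∨ b ∈ T) then 2 else 0) with hGvdef
    set Gc := (∑ a : Fin (m*N), ∑ b : Fin (m*N),
        if (a < b ∧ grp a = grp b) ∧ a ∈ Tᶜ ∧ b ∈ Tᶜ then 2 else 0) with hGcdef
    set Gtot := (∑ a : Fin (m*N), ∑ b : Fin (m*N),
        if a < b ∧ grp a = grp b then 2 else 0) with hGtotdef
    set eq : Fin N → ℕ := fun q => (Tᶜ.filter fun x => grp x = q).card with heqdef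
    set E := ∑ q : Fin N, eq q * eq q with hEdef
    -- split identities
    have hsplitV : Av + Ac = Atot := split_compl S (· < ·) (2*g)
    have hsplitG : Gv + Gc = Gtot := split_compl T (fun a b => a < b ∧ grp a = grp b) 2
    -- totals
    have htotV : 2 * Atot + (2*g) * (m*N) = (2*g) * ((m*N) * (m*N)) := by
      have h := count_V' (Finset.univ : Finset (Fin (m*N))) (2*g)
      rw [Finset.card_univ, Fintype.card_fin] at h
      rw [← h]
      congr 2
      refine Finset.sum_congr rfl fun a _ => Finset.sum_congr rfl fun b _ => ?_
      refine if_congr ?_ rfl rfl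
      simp
    have htotG : 2 * Gtot + 2 * (N*m) = 2 * (N * (m*m)) := by
      have h := count_grp' grp (Finset.univ : Finset (Fin (m*N))) 2
      have hfib1 : (∑ q : Fin N, ((Finset.univ : Finset (Fin (m*N))).filter
          fun x => grp x = q).card) = N * m := by
        rw [Finset.sum_congr rfl (fun q _ => hsz q), Finset.sum_const, Finset.card_univ,
          Fintype.card_fin, smul_eq_mul]
      have hfib2 : (∑ q : Fin N, ((Finset.univ : Finset (Fin (m*N))).filter
            fun x => grp x = q).card * ((Finset.univ : Finset (Fin (m*N))).filter
            fun x => grp x = q).card) = N * (m * m) := by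
        rw [Finset.sum_congr rfl (fun q _ => by rw [hsz q]), Finset.sum_const,
          Finset.card_univ, Fintype.card_fin, smul_eq_mul]
      rw [hfib1, hfib2] at h
      rw [← h]
      congr 2
      refine Finset.sum_congr rfl fun a _ => Finset.sum_congr rfl fun b _ => ?_
      refine if_congr ?_ rfl rfl
      simp
    -- complement counts
    have hEsum : ∑ q : Fin N, eq q = i0 := by
      rw [← hcardTc]
      exact (Finset.card_eq_sum_card_fiberwise (fun x _ => Finset.mem_univ (grp x))).symm
    have hcAc : 2 * Ac + (2*g) * i0 = (2*g) * (i0 * i0) := by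
      have h := count_V' Sᶜ (2*g)
      rwa [hcardSc] at h
    have hcGc : 2 * Gc + 2 * i0 = 2 * E := by
      have h : 2 * Gc + 2 * ∑ q : Fin N, eq q = 2 * E := count_grp' grp Tᶜ 2
      rwa [hEsum] at h
    have hCS : i0 * i0 ≤ N * E := by
      have h := sq_sum_le_card_mul_sum_sq (s := (Finset.univ : Finset (Fin N)))
        (f := fun q => (eq q : ℕ))
      simpa [hEsum, Finset.card_univ, sq, pow_two, hEdef] using h
    have hsum_ge : k * ν i ≤ ∑ j ∈ S, ν j := by
      have h := Finset.card_nsmul_le_sum S ν (ν i)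
        (fun j hj => hmono (Finset.mem_Ici.mp hj))
      simpa [hcardS, smul_eq_mul] using h
    have u1 : k * ν i ≤ Av + Gv := by
      calc k * ν i ≤ ∑ j ∈ S, ν j := hsum_ge
        _ = (∑ j ∈ S, μ j) + ∑ j ∈ S, d2 j := hν S
        _ ≤ Av + Gv := Nat.add_le_add hV hG'
    -- contradiction
    clear_value S T Av Ac Atot Gv Gc Gtot eq E i0 p
    clear hV hG hG' hμ hρ hd2 hmem hc hsum hν hmono hSdef hTdef hAvdef hAcdef hAtotdef hGvdef hGcdef hGtotdef heqdef hEdef hsum_ge hcardS hcardT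
    by_contra hcon
    push_neg at hcon
    obtain ⟨r, hi0r, hrN⟩ : ∃ r, N * p + r = i0 ∧ r < N :=
      ⟨i0 % N, by rw [hpdef]; exact Nat.div_add_mod i0 N, Nat.mod_lt _ (by omega)⟩
    -- move to ℤ
    have hconz : ((m:ℤ) - 1 + p) + ((m:ℤ)*N + i0 - 1)*g + 1 ≤ (ν i : ℤ) := by
      have h1 : (1:ℕ) ≤ m := by omega
      have h2 : (1:ℕ) ≤ m * N + i0 := by
        have : 1 ≤ m * N := by omega
        omega
      zify [h1, h2] at hcon
      linarith [hcon]
    have u1z : (k:ℤ) * (ν i : ℤ) ≤ (Av:ℤ) + Gv := by exact_mod_cast u1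
    have hsplitVz : (Av:ℤ) + Ac = Atot := by exact_mod_cast hsplitV
    have hsplitGz : (Gv:ℤ) + Gc = Gtot := by exact_mod_cast hsplitG
    have htotVz : 2 * (Atot:ℤ) + (2*g) * (m*N) = (2*g) * ((m*N) * (m*N)) := by
      exact_mod_cast htotV
    have htotGz : 2 * (Gtot:ℤ) + 2 * (N*m) = 2 * (N * (m*m)) := by exact_mod_cast htotG
    have hcAcz : 2 * (Ac:ℤ) + (2*g) * i0 = (2*g) * ((i0:ℤ) * i0) := by exact_mod_cast hcAc
    have hcGcz : 2 * (Gc:ℤ) + 2 * i0 = 2 * (E:ℤ) := by exact_mod_cast hcGc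
    have hCSz : (i0:ℤ) * i0 ≤ N * (E:ℤ) := by exact_mod_cast hCS
    have hkz : (k:ℤ) = (m:ℤ)*N - i0 := by
      have h := congrArg (fun x : ℕ => (x:ℤ)) hk
      push_cast at h
      linarith only [h]
    have hi0z : (i0:ℤ) = (N:ℤ)*p + r := by
      have h := congrArg (fun x : ℕ => (x:ℤ)) hi0r
      push_cast at h
      linarith only [h]
    have hmulk : 2*(k:ℤ)*(((m:ℤ) - 1 + p) + ((m:ℤ)*N + i0 - 1)*g + 1) ≤ 2*(k:ℤ)*(ν i) := by
      have hk0 : (0:ℤ) ≤ 2*(k:ℤ) := by positivity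
      exact mul_le_mul_of_nonneg_left hconz hk0
    have hid : (k:ℤ)*((m:ℤ)*N + i0 - 1)
        = ((m:ℤ)*N*((m:ℤ)*N) - (m:ℤ)*N) - ((i0:ℤ)*i0 - i0) := by
      rw [hkz]; ring
    have hidg : 2*(g:ℤ)*((k:ℤ)*((m:ℤ)*N + i0 - 1))
        = 2*(g:ℤ)*(((m:ℤ)*N*((m:ℤ)*N) - (m:ℤ)*N) - ((i0:ℤ)*i0 - i0)) := by rw [hid]
    have key : (E:ℤ) + (k:ℤ)*((m:ℤ)+p) ≤ (N:ℤ)*((m:ℤ)*m - m) + i0 := by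
      linarith only [hmulk, u1z, hsplitVz, hsplitGz, htotVz, htotGz, hcAcz, hcGcz, hidg]
    have keyN : (N:ℤ)*(E:ℤ) + (N:ℤ)*((k:ℤ)*((m:ℤ)+p))
        ≤ (N:ℤ)*((N:ℤ)*((m:ℤ)*m - m)) + (N:ℤ)*i0 := by
      have hN0 : (0:ℤ) ≤ N := by positivity
      have h := mul_le_mul_of_nonneg_left key hN0
      linarith only [h]
    have hrz : (r:ℤ) < N := by exact_mod_cast hrN
    have hpmz : (p:ℤ) + 1 ≤ m := by exact_mod_cast hpm
    have hprod : (0:ℤ) < ((N:ℤ) - r) * ((N:ℤ)*m - (N:ℤ)*p - r) := by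
      apply mul_pos
      · linarith only [hrz]
      · have hN0 : (0:ℤ) ≤ N := by positivity
        have h := mul_le_mul_of_nonneg_left hpmz hN0
        linarith only [h, hrz]
    rw [hi0z] at hkz hCSz keyN
    rw [hkz] at keyN
    linarith only [keyN, hCSz, hprod]
end
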